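/- Define the sample measures μ_q := (1/2)·δ_{a₀(q)} + (1/2)·δ_{a₁(q)} on ℕ, where a₀, a₁ are the pullback limits of the birth-death chain. Then: (i) the family (μ_q) is invariant, i.e. the pushforward of μ_q under the map x ↦ f(q₀, x) equals μ_{θq} for ℙ-a.e. q; and (ii) the expected measure B ↦ ∫_Q μ_q(B) dℙ(q) equals the unique stationary distribution ρ of the embedded birth-death Markov chain. -/

import Mathlib

open MeasureTheory ProbabilityTheory Filter

/-- The birth-death transition map. -/
noncomputable def bdStep (γ₁ γ₂ : ℝ) (q : ℝ) (x : ℕ) : ℕ :=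
  if q < γ₁ / (γ₁ + γ₂ * x) then x + 1 else x - 1

/-- The cocycle of the embedded birth-death chain over the two-sided noise space. -/
noncomputable def bdCocycleZ (γ₁ γ₂ : ℝ) (q : ℤ → ℝ) : ℕ → ℕ → ℕ
  | 0, x => x
  | n + 1, x => bdStep γ₁ γ₂ (q (n : ℤ)) (bdCocycleZ γ₁ γ₂ q n x)

/-- The pullback iterate `φ^{2n}_{θ^{−2n}q}(x)`. -/
noncomputable def bdPullback (γ₁ γ₂ : ℝ) (q : ℤ → ℝ) (n : ℕ) (x : ℕ) : ℕ :=
  bdCocycleZ γ₁ γ₂ (fun i => q (i - 2 * (n : ℤ))) (2 * n) x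

/-- The shift `(θq)ₙ = q_{n+1}`. -/
def shiftZ (q : ℤ → ℝ) : ℤ → ℝ := fun i => q (i + 1)

/-- Transition probabilities of the embedded birth-death chain. -/
noncomputable def bdP (γ₁ γ₂ : ℝ) (x y : ℕ) : ℝ :=
  if y = x + 1 then γ₁ / (γ₁ + γ₂ * x)
  else if y + 1 = x then γ₂ * x / (γ₁ + γ₂ * x)
  else 0

/-- The sample measures `μ_q = ½δ_{a₀(q)} + ½δ_{a₁(q)}`. -/
noncomputable def sampleMeasure (a₀ a₁ : (ℤ → ℝ) → ℕ) (q : ℤ → ℝ) : Measure ℕ :=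
  (1 / 2 : ENNReal) • Measure.dirac (a₀ q) + (1 / 2 : ENNReal) • Measure.dirac (a₁ q)


section Det
variable {γ₁ γ₂ : ℝ}

lemma qcongr (q : ℤ → ℝ) {a b : ℤ} (h : a = b) : q a = q b := by rw [h]

lemma bdCocycleZ_succ_bot (q : ℤ → ℝ) (n : ℕ) (x : ℕ) :
    bdCocycleZ γ₁ γ₂ q (n + 1) x
      = bdCocycleZ γ₁ γ₂ (fun i => q (i + 1)) n (bdStep γ₁ γ₂ (q 0) x) := by
  induction n with
  | zero => simp [bdCocycleZ]
  | succ n ih =>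
      rw [show bdCocycleZ γ₁ γ₂ q (n + 1 + 1) x
          = bdStep γ₁ γ₂ (q ((n+1 : ℕ) : ℤ)) (bdCocycleZ γ₁ γ₂ q (n+1) x) from rfl]
      rw [ih, show bdCocycleZ γ₁ γ₂ (fun i => q (i + 1)) (n+1) (bdStep γ₁ γ₂ (q 0) x)
          = bdStep γ₁ γ₂ ((fun i : ℤ => q (i + 1)) (n : ℤ))
            (bdCocycleZ γ₁ γ₂ (fun i => q (i + 1)) n (bdStep γ₁ γ₂ (q 0) x)) from rfl]
      first
      | rfl
      | (congr 1; exact qcongr q (by push_cast; ring))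

lemma bdStep_zero (hγ₁ : 0 < γ₁) {r : ℝ} (hr : r < 1) : bdStep γ₁ γ₂ r 0 = 1 := by
  simp [bdStep, div_self hγ₁.ne', hr]

lemma R1 (hγ₁ : 0 < γ₁) (q : ℤ → ℝ) (n : ℕ) (h : q (0 - 2 * (n : ℤ)) < 1) :
    bdStep γ₁ γ₂ (q 0) (bdPullback γ₁ γ₂ q n 0) = bdPullback γ₁ γ₂ (shiftZ q) n 1 := by
  have h1 : bdStep γ₁ γ₂ (q 0) (bdPullback γ₁ γ₂ q n 0)
      = bdCocycleZ γ₁ γ₂ (fun i => q (i - 2 * (n : ℤ))) (2 * n + 1) 0 := by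
    rw [bdCocycleZ]
    congr 2
    push_cast; ring
  rw [h1, bdCocycleZ_succ_bot, bdStep_zero hγ₁ h]
  unfold bdPullback shiftZ
  congr 1
  funext i; ring_nf

lemma R2 (hγ₁ : 0 < γ₁) (q : ℤ → ℝ) (n : ℕ) (h : q (-(2 * (n : ℤ) + 1)) < 1) :
    bdPullback γ₁ γ₂ (shiftZ q) (n + 1) 0 = bdStep γ₁ γ₂ (q 0) (bdPullback γ₁ γ₂ q n 1) := by
  have h2 : (2 * (n + 1) : ℕ) = (2 * n + 1) + 1 := by ring
  unfold bdPullback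
  rw [h2, bdCocycleZ]
  have e1 : (shiftZ q) ((((2 * n + 1) : ℕ) : ℤ) - 2 * ((n+1 : ℕ) : ℤ)) = q 0 := by
    exact qcongr q (by push_cast; ring)
  rw [e1]
  rw [bdCocycleZ_succ_bot]
  have e0 : (shiftZ q) (0 - 2 * ((n+1:ℕ) : ℤ)) = q (-(2 * (n:ℤ) + 1)) := by
    exact qcongr q (by push_cast; ring)
  rw [e0, bdStep_zero hγ₁ h]
  have e2 : (fun i => shiftZ q (i + 1 - 2 * ((n+1:ℕ) : ℤ))) = fun i : ℤ => q (i - 2 * (n:ℤ)) := by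
    funext i; exact qcongr q (by push_cast; ring)
  rw [e2]

end Det

section Marg
variable {P : Measure (ℤ → ℝ)} [IsProbabilityMeasure P]

lemma uniformIcc_isProb : IsProbabilityMeasure (volume.restrict (Set.Icc (0:ℝ) 1)) := by
  constructor
  rw [Measure.restrict_apply MeasurableSet.univ, Set.univ_inter, Real.volume_Icc]
  norm_num

lemma coord_prob (hUnif : ∀ i : ℤ, P.map (fun q => q i) = volume.restrict (Set.Icc (0 : ℝ) 1))
    (i : ℤ) {S : Set ℝ} (hS : MeasurableSet S) :
    P ((fun q : ℤ → ℝ => q i) ⁻¹' S) = volume.restrict (Set.Icc (0:ℝ) 1) S := by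
  rw [← hUnif i, Measure.map_apply (measurable_pi_apply i) hS]

lemma marg (hIndep : iIndepFun (fun (i : ℤ) (q : ℤ → ℝ) => q i) P)
    (hUnif : ∀ i : ℤ, P.map (fun q => q i) = volume.restrict (Set.Icc (0 : ℝ) 1))
    (s : Finset ℤ) (c : ℤ) :
    P.map (fun (q : ℤ → ℝ) (i : s) => q (i + c))
      = Measure.pi (fun _ : s => volume.restrict (Set.Icc (0:ℝ) 1)) := by
  have hF : Measurable (fun (q : ℤ → ℝ) (i : s) => q (i + c)) :=
    measurable_pi_lambda _ fun i => measurable_pi_apply _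
  refine (Measure.pi_eq fun t ht => ?_).symm
  classical
  set T : ℤ → Set ℝ := fun j => if h : j - c ∈ s then t ⟨j - c, h⟩ else Set.univ with hT
  have hTmeas : ∀ j, MeasurableSet (T j) := by
    intro j; rw [hT]; dsimp only
    split
    · exact ht _
    · exact MeasurableSet.univ
  have hTval : ∀ (i : ℤ) (hi : i ∈ s), T (i + c) = t ⟨i, hi⟩ := by
    intro i hi
    rw [hT]; dsimp only
    have h1 : i + c - c = i := by ring
    have h2 : ∀ (h : i + c - c ∈ s), (⟨i + c - c, h⟩ : s) = ⟨i, hi⟩ := fun h => Subtype.ext h1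
    rw [dif_pos (by rw [h1]; exact hi), h2]
  have hpre : (fun (q : ℤ → ℝ) (i : s) => q (i + c)) ⁻¹' (Set.pi Set.univ t)
      = ⋂ j ∈ s.image (· + c), (fun q : ℤ → ℝ => q j) ⁻¹' (T j) := by
    ext q
    simp only [Set.mem_preimage, Set.mem_pi, Set.mem_univ, forall_true_left, Set.mem_iInter,
      Finset.mem_image]
    constructor
    · rintro h j ⟨i, hi, rfl⟩
      rw [hTval i hi]
      exact h ⟨i, hi⟩
    · rintro h ⟨i, hi⟩
      have := h (i + c) ⟨i, hi, rfl⟩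
      rwa [hTval i hi] at this
  rw [Measure.map_apply hF (MeasurableSet.univ_pi ht), hpre,
    hIndep.measure_inter_preimage_eq_mul _ (fun j _ => hTmeas j)]
  rw [Finset.prod_image (by intro a _ b _ h; exact add_right_cancel h)]
  rw [← Finset.prod_coe_sort]
  apply Finset.prod_congr rfl
  intro i _
  rw [hTval i i.2, coord_prob hUnif _ (ht i)]

lemma shift_inv (hIndep : iIndepFun (fun (i : ℤ) (q : ℤ → ℝ) => q i) P)
    (hUnif : ∀ i : ℤ, P.map (fun q => q i) = volume.restrict (Set.Icc (0 : ℝ) 1)) :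
    P.map (fun q : ℤ → ℝ => fun i => q (i + 1)) = P := by
  have hsh : Measurable (fun q : ℤ → ℝ => fun i => q (i + 1)) :=
    measurable_pi_lambda _ fun i => measurable_pi_apply _
  have h1 : IsProbabilityMeasure (P.map (fun q : ℤ → ℝ => fun i => q (i + 1))) :=
    Measure.isProbabilityMeasure_map hsh.aemeasurable
  refine ext_of_generate_finite (measurableCylinders (fun _ : ℤ => ℝ)) (generateFrom_measurableCylinders (α := fun _ : ℤ => ℝ)).symm
    isPiSystem_measurableCylinders (fun t ht => ?_) (by simp)
  obtain ⟨s, S, hS, rfl⟩ := (mem_measurableCylinders t).mp ht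
  have hc : MeasurableSet (cylinder s S) := MeasurableSet.cylinder (α := fun _ : ℤ => ℝ) s hS
  rw [Measure.map_apply hsh hc]
  have e1 : (fun q : ℤ → ℝ => fun i => q (i + 1)) ⁻¹' cylinder s S
      = (fun (q : ℤ → ℝ) (i : s) => q (i + 1)) ⁻¹' S := rfl
  have e2 : cylinder s S = (fun (q : ℤ → ℝ) (i : s) => q (i + 0)) ⁻¹' S := by
    have : (fun (q : ℤ → ℝ) (i : s) => q (i + 0)) = fun (q : ℤ → ℝ) => s.restrict q := by
      funext q i; rw [add_zero]; rfl
    rw [cylinder, this]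
  rw [e1, e2]
  rw [← Measure.map_apply (measurable_pi_lambda _ fun i => measurable_pi_apply _) hS,
      ← Measure.map_apply (measurable_pi_lambda _ fun i => measurable_pi_apply _) hS,
      marg hIndep hUnif s 1, marg hIndep hUnif s 0]

end Marg

section Meas
variable {γ₁ γ₂ : ℝ}

def negSig : MeasurableSpace (ℤ → ℝ) :=
  ⨆ i ∈ Set.Iio (0:ℤ), MeasurableSpace.comap (fun q : ℤ → ℝ => q i) inferInstance

lemma negSig_le : negSig ≤ MeasurableSpace.pi :=
  iSup₂_le fun i _ => (measurable_pi_apply i).comap_le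

lemma meas_eval_neg {i : ℤ} (hi : i < 0) : Measurable[negSig] fun q : ℤ → ℝ => q i := by
  rw [measurable_iff_comap_le]
  exact le_iSup₂ (f := fun i (_ : i ∈ Set.Iio (0:ℤ)) =>
    MeasurableSpace.comap (fun q : ℤ → ℝ => q i) inferInstance) i hi

lemma measurable_bdStep_pair : Measurable (fun p : ℝ × ℕ => bdStep γ₁ γ₂ p.1 p.2) := by
  apply measurable_from_prod_countable_left
  intro x
  show Measurable fun r : ℝ => if r < γ₁ / (γ₁ + γ₂ * x) then x + 1 else x - 1
  exact Measurable.ite (measurableSet_lt measurable_id measurable_const)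
    measurable_const measurable_const

lemma meas_cocycle {M : MeasurableSpace (ℤ → ℝ)} {g : ℤ → ℤ} (n x : ℕ)
    (hg : ∀ k : ℕ, k < n → Measurable[M] fun q : ℤ → ℝ => q (g k)) :
    Measurable[M] fun q : ℤ → ℝ => bdCocycleZ γ₁ γ₂ (fun i => q (g i)) n x := by
  induction n with
  | zero => exact measurable_const
  | succ n ih =>
      have h1 : (fun q : ℤ → ℝ => bdCocycleZ γ₁ γ₂ (fun i => q (g i)) (n+1) x)
          = (fun p : ℝ × ℕ => bdStep γ₁ γ₂ p.1 p.2) ∘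
            (fun q : ℤ → ℝ => (q (g (n : ℤ)), bdCocycleZ γ₁ γ₂ (fun i => q (g i)) n x)) := rfl
      rw [h1]
      exact measurable_bdStep_pair.comp
        ((hg n (Nat.lt_succ_self n)).prodMk (ih fun k hk => hg k (hk.trans (Nat.lt_succ_self n))))

lemma meas_pullback (n x : ℕ) :
    Measurable[negSig] fun q : ℤ → ℝ => bdPullback γ₁ γ₂ q n x := by
  by_cases hn : n = 0
  · subst hn
    exact meas_cocycle (g := fun i => i - 2 * ((0:ℕ) : ℤ)) 0 x (by omega)
  · exact meas_cocycle (g := fun i => i - 2 * (n : ℤ)) (2 * n) x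
      (fun k hk => meas_eval_neg (by push_cast; omega))

def Eset (γ₁ γ₂ : ℝ) (x₀ x : ℕ) : Set (ℤ → ℝ) :=
  {q | ∀ᶠ n in atTop, bdPullback γ₁ γ₂ q n x₀ = x}

lemma Eset_meas (x₀ x : ℕ) : MeasurableSet[negSig] (Eset γ₁ γ₂ x₀ x) := by
  have : Eset γ₁ γ₂ x₀ x = ⋃ m, ⋂ n, ⋂ (_ : m ≤ n),
      (fun q : ℤ → ℝ => bdPullback γ₁ γ₂ q n x₀) ⁻¹' {x} := by
    ext q
    simp [Eset, eventually_atTop, Set.mem_iUnion, Set.mem_iInter]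
  rw [this]
  exact MeasurableSet.iUnion fun m => MeasurableSet.iInter fun n => MeasurableSet.iInter
    fun _ => (meas_pullback n x₀) (MeasurableSet.singleton x)

lemma Eset_disj (x₀ : ℕ) : Pairwise (Function.onFun Disjoint fun x => Eset γ₁ γ₂ x₀ x) := by
  intro x x' hxx'
  simp only [Function.onFun, Set.disjoint_left]
  intro q hq hq'
  have := (hq.and hq').exists
  obtain ⟨n, h1, h2⟩ := this
  exact hxx' (h1 ▸ h2 ▸ rfl)

end Meas

section Prob
variable {γ₁ γ₂ : ℝ} {P : Measure (ℤ → ℝ)} [IsProbabilityMeasure P]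

lemma coord_lt_one (hUnif : ∀ i : ℤ, P.map (fun q => q i) = volume.restrict (Set.Icc (0 : ℝ) 1)) :
    ∀ᵐ q ∂P, ∀ i : ℤ, q i < 1 := by
  rw [ae_all_iff]
  intro i
  have h1 : {q : ℤ → ℝ | ¬ q i < 1} = (fun q : ℤ → ℝ => q i) ⁻¹' (Set.Ici 1) := by
    ext q; simp [not_lt]
  rw [ae_iff, h1, coord_prob hUnif i measurableSet_Ici,
    Measure.restrict_apply measurableSet_Ici]
  have : Set.Ici (1:ℝ) ∩ Set.Icc 0 1 = {1} := by
    ext r; simp only [Set.mem_inter_iff, Set.mem_Ici, Set.mem_Icc, Set.mem_singleton_iff]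
    constructor
    · rintro ⟨h1, _, h2⟩; linarith
    · rintro rfl; norm_num
  rw [this, Real.volume_singleton]

lemma indep0 (hIndep : iIndepFun (fun (i : ℤ) (q : ℤ → ℝ) => q i) P) :
    Indep negSig (MeasurableSpace.comap (fun q : ℤ → ℝ => q 0) inferInstance) P := by
  have hle : ∀ n : ℤ, MeasurableSpace.comap (fun q : ℤ → ℝ => q n) inferInstance
      ≤ MeasurableSpace.pi := fun n => (measurable_pi_apply n).comap_le
  have hiI : iIndep (fun i : ℤ => MeasurableSpace.comap (fun q : ℤ → ℝ => q i) inferInstance) P :=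
    (iIndepFun_iff_iIndep _ _ _).mp hIndep
  have h := indep_biSup_compl hle hiI (Set.Iio 0)
  refine indep_of_indep_of_le_right h ?_
  exact le_iSup₂ (f := fun i (_ : i ∈ (Set.Iio (0:ℤ))ᶜ) =>
    MeasurableSpace.comap (fun q : ℤ → ℝ => q i) inferInstance) 0 (by simp)

lemma indep_apply (hIndep : iIndepFun (fun (i : ℤ) (q : ℤ → ℝ) => q i) P)
    {E : Set (ℤ → ℝ)} (hE : MeasurableSet[negSig] E) {S : Set ℝ} (hS : MeasurableSet S) :
    P (E ∩ (fun q : ℤ → ℝ => q 0) ⁻¹' S)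
      = P E * P ((fun q : ℤ → ℝ => q 0) ⁻¹' S) := by
  exact (Indep_iff _ _ _).mp (indep0 hIndep) E _ hE ⟨S, hS, rfl⟩

lemma bdStep_set_meas (hγ₁ : 0 < γ₁) (x y : ℕ) :
    MeasurableSet {r : ℝ | bdStep γ₁ γ₂ r x = y} := by
  have : {r : ℝ | bdStep γ₁ γ₂ r x = y}
      = (fun r => bdStep γ₁ γ₂ r x) ⁻¹' {y} := rfl
  rw [this]
  exact (measurable_bdStep_pair.comp (measurable_id.prodMk measurable_const))
    (MeasurableSet.singleton y)

lemma bdStep_event (hγ₁ : 0 < γ₁) (hγ₂ : 0 < γ₂)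
    (hUnif : ∀ i : ℤ, P.map (fun q => q i) = volume.restrict (Set.Icc (0 : ℝ) 1)) (x y : ℕ) :
    P ((fun q : ℤ → ℝ => q 0) ⁻¹' {r | bdStep γ₁ γ₂ r x = y})
      = ENNReal.ofReal (bdP γ₁ γ₂ x y) := by
  have hd : (0:ℝ) < γ₁ + γ₂ * x := by positivity
  set c := γ₁ / (γ₁ + γ₂ * x) with hc
  have hc0 : 0 < c := div_pos hγ₁ hd
  have hc1 : c ≤ 1 := by
    rw [hc, div_le_one hd]
    nlinarith [hγ₂.le, Nat.cast_nonneg (α := ℝ) x]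
  rw [coord_prob hUnif 0 (bdStep_set_meas hγ₁ x y)]
  rw [Measure.restrict_apply (bdStep_set_meas hγ₁ x y)]
  by_cases h1 : y = x + 1
  · have hset : {r : ℝ | bdStep γ₁ γ₂ r x = y} = Set.Iio c := by
      ext r
      simp only [bdStep, Set.mem_setOf_eq, Set.mem_Iio, ← hc]
      constructor
      · intro h
        by_contra hrc
        rw [if_neg hrc] at h
        omega
      · intro h
        rw [if_pos h]
        omega
    rw [hset, bdP, if_pos h1, ← hc]
    have : Set.Iio c ∩ Set.Icc (0:ℝ) 1 = Set.Ico 0 c := by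
      ext r
      simp only [Set.mem_inter_iff, Set.mem_Iio, Set.mem_Icc, Set.mem_Ico]
      constructor
      · rintro ⟨h, h2, h3⟩; exact ⟨h2, h⟩
      · rintro ⟨h2, h⟩; exact ⟨h, h2, by linarith⟩
    rw [this, Real.volume_Ico, sub_zero]
  · by_cases h2 : y + 1 = x
    · have hset : {r : ℝ | bdStep γ₁ γ₂ r x = y} = Set.Ici c := by
        ext r
        simp only [bdStep, Set.mem_setOf_eq, Set.mem_Ici, ← hc]
        constructor
        · intro h
          by_contra hrc
          rw [not_le] at hrc
          rw [if_pos hrc] at h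
          omega
        · intro h
          rw [if_neg (not_lt.mpr h)]
          omega
      rw [hset, bdP, if_neg h1, if_pos h2]
      have : Set.Ici c ∩ Set.Icc (0:ℝ) 1 = Set.Icc c 1 := by
        ext r
        simp only [Set.mem_inter_iff, Set.mem_Ici, Set.mem_Icc]
        constructor
        · rintro ⟨h, h3, h4⟩; exact ⟨h, h4⟩
        · rintro ⟨h, h4⟩; exact ⟨h, by linarith, h4⟩
      rw [this, Real.volume_Icc]
      congr 1
      rw [hc]
      field_simp
      try ring
    · by_cases h3 : x = 0 ∧ y = 0
      · obtain ⟨hx, hy⟩ := h3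
        subst hx; subst hy
        have hc' : γ₁ / (γ₁ + γ₂ * ((0:ℕ):ℝ)) = 1 := by
          norm_num
          exact hγ₁.ne'
        have hset : {r : ℝ | bdStep γ₁ γ₂ r 0 = 0} = Set.Ici 1 := by
          ext r
          simp only [bdStep, Set.mem_setOf_eq, Set.mem_Ici, hc']
          constructor
          · intro h
            by_contra hr
            rw [not_le] at hr
            rw [if_pos hr] at h
            omega
          · intro h
            rw [if_neg (not_lt.mpr h)]
        rw [hset, bdP]
        norm_num
        have : Set.Ici (1:ℝ) ∩ Set.Icc 0 1 = {1} := by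
          ext r; simp only [Set.mem_inter_iff, Set.mem_Ici, Set.mem_Icc, Set.mem_singleton_iff]
          constructor
          · rintro ⟨ha, _, hb⟩; linarith
          · rintro rfl; norm_num
        rw [this, Real.volume_singleton]
      · have hset : {r : ℝ | bdStep γ₁ γ₂ r x = y} = ∅ := by
          ext r
          simp only [bdStep, Set.mem_setOf_eq, Set.mem_empty_iff_false, iff_false]
          intro h
          by_cases hrc : r < γ₁ / (γ₁ + γ₂ * x)
          · rw [if_pos hrc] at h
            exact h1 h.symm
          · rw [if_neg hrc] at h
            omega
        rw [hset, bdP, if_neg h1, if_neg h2]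
        simp
end Prob

section Unique
variable {γ₁ γ₂ : ℝ}

lemma bdP_zero {x y : ℕ} (h1 : ¬ y = x + 1) (h2 : ¬ y + 1 = x) : bdP γ₁ γ₂ x y = 0 := by
  rw [bdP, if_neg h1, if_neg h2]

lemma bdP_up (y : ℕ) : bdP γ₁ γ₂ y (y + 1) = γ₁ / (γ₁ + γ₂ * y) := by
  rw [bdP, if_pos rfl]

lemma bdP_down (y : ℕ) : bdP γ₁ γ₂ (y + 1) y = γ₂ * (y + 1) / (γ₁ + γ₂ * (y + 1)) := by
  rw [bdP, if_neg (by omega), if_pos rfl]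
  push_cast
  ring_nf

lemma bdP_up_pos (hγ₁ : 0 < γ₁) (hγ₂ : 0 < γ₂) (y : ℕ) : 0 < bdP γ₁ γ₂ y (y + 1) := by
  rw [bdP_up]
  positivity

lemma bdP_down_pos (hγ₁ : 0 < γ₁) (hγ₂ : 0 < γ₂) (y : ℕ) : 0 < bdP γ₁ γ₂ (y + 1) y := by
  rw [bdP_down]
  positivity

lemma bdP_sum_one (hγ₁ : 0 < γ₁) (hγ₂ : 0 < γ₂) (y : ℕ) :
    bdP γ₁ γ₂ (y + 1) (y + 2) + bdP γ₁ γ₂ (y + 1) y = 1 := by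
  rw [show y + 2 = (y+1) + 1 from rfl, bdP_up, bdP_down]
  have hd : (0:ℝ) < γ₁ + γ₂ * ((y:ℝ) + 1) := by positivity
  have hd' : γ₁ + γ₂ * ((y + 1 : ℕ) : ℝ) = γ₁ + γ₂ * ((y:ℝ) + 1) := by push_cast; ring
  rw [hd']
  field_simp

lemma stat_rec (f : ℕ → ℝ) (h : ∀ y, ∑' x, f x * bdP γ₁ γ₂ x y = f y) :
    f 1 * bdP γ₁ γ₂ 1 0 = f 0 ∧
    ∀ y, f y * bdP γ₁ γ₂ y (y+1) + f (y+2) * bdP γ₁ γ₂ (y+2) (y+1) = f (y+1) := by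
  constructor
  · have h0 := h 0
    rw [tsum_eq_sum (s := {1}) (by
      intro x hx
      simp only [Finset.mem_singleton] at hx
      rw [bdP_zero (by omega) (by omega), mul_zero])] at h0
    simpa using h0
  · intro y
    have hy := h (y + 1)
    rw [tsum_eq_sum (s := {y, y + 2}) (by
      intro x hx
      simp only [Finset.mem_insert, Finset.mem_singleton] at hx
      push_neg at hx
      rw [bdP_zero (by omega) (by omega), mul_zero])] at hy
    rwa [Finset.sum_pair (by omega)] at hy

lemma detailed_balance (hγ₁ : 0 < γ₁) (hγ₂ : 0 < γ₂) (f : ℕ → ℝ)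
    (h : ∀ y, ∑' x, f x * bdP γ₁ γ₂ x y = f y) :
    ∀ y, f y * bdP γ₁ γ₂ y (y+1) = f (y+1) * bdP γ₁ γ₂ (y+1) y := by
  obtain ⟨h0, hrec⟩ := stat_rec f h
  intro y
  induction y with
  | zero =>
      have : bdP γ₁ γ₂ 0 1 = 1 := by
        rw [show (1:ℕ) = 0 + 1 from rfl, bdP_up]
        norm_num
        exact hγ₁.ne'
      rw [show (0:ℕ) + 1 = 1 from rfl, this, mul_one, ← h0]
  | succ y ih =>
      have hr := hrec y
      rw [ih] at hr
      have hsum := bdP_sum_one hγ₁ hγ₂ y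
      show f (y+1) * bdP γ₁ γ₂ (y+1) (y+2) = f (y+2) * bdP γ₁ γ₂ (y+2) (y+1)
      have hA : bdP γ₁ γ₂ (y+1) (y+2) = 1 - bdP γ₁ γ₂ (y+1) y := by linarith
      rw [hA, mul_sub, mul_one]
      linarith [hr]

lemma stationary_unique (hγ₁ : 0 < γ₁) (hγ₂ : 0 < γ₂) (g ρ : ℕ → ℝ)
    (hgsum : ∑' x, g x = 1) (hρsum : ∑' x, ρ x = 1)
    (hgstat : ∀ y, ∑' x, g x * bdP γ₁ γ₂ x y = g y)
    (hρstat : ∀ y, ∑' x, ρ x * bdP γ₁ γ₂ x y = ρ y) : g = ρ := by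
  have hgdb := detailed_balance hγ₁ hγ₂ g hgstat
  have hρdb := detailed_balance hγ₁ hγ₂ ρ hρstat
  have hcross : ∀ y, g y * ρ 0 = ρ y * g 0 := by
    intro y
    induction y with
    | zero => ring
    | succ y ih =>
        have hB : bdP γ₁ γ₂ (y+1) y ≠ 0 := (bdP_down_pos hγ₁ hγ₂ y).ne'
        apply mul_right_cancel₀ hB
        have e1 : g (y + 1) * ρ 0 * bdP γ₁ γ₂ (y+1) y = (g y * ρ 0) * bdP γ₁ γ₂ y (y+1) := by
          rw [mul_comm (g (y+1)) (ρ 0), mul_assoc, ← hgdb y]; ring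
        have e2 : ρ (y + 1) * g 0 * bdP γ₁ γ₂ (y+1) y = (ρ y * g 0) * bdP γ₁ γ₂ y (y+1) := by
          rw [mul_comm (ρ (y+1)) (g 0), mul_assoc, ← hρdb y]; ring
        rw [e1, e2, ih]
  have hρ0 : ρ 0 ≠ 0 := by
    intro h0
    have hz : ∀ y, ρ y = 0 := by
      intro y
      induction y with
      | zero => exact h0
      | succ y ih =>
          have := hρdb y
          rw [ih, zero_mul] at this
          exact (mul_eq_zero.mp this.symm).resolve_right (bdP_down_pos hγ₁ hγ₂ y).ne'
    have : ∑' x, ρ x = 0 := by simp [hz]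
    rw [hρsum] at this
    norm_num at this
  have hsum_eq : (∑' y, g y * ρ 0) = ∑' y, ρ y * g 0 := by
    exact tsum_congr hcross
  rw [tsum_mul_right, tsum_mul_right, hgsum, hρsum, one_mul, one_mul] at hsum_eq
  funext y
  have := hcross y
  rw [← hsum_eq] at this
  exact mul_right_cancel₀ hρ0 this

end Unique

lemma bdP_nonneg {γ₁ γ₂ : ℝ} (hγ₁ : 0 < γ₁) (hγ₂ : 0 < γ₂) (x y : ℕ) :
    0 ≤ bdP γ₁ γ₂ x y := by
  rw [bdP]
  split
  · positivity
  · split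
    · positivity
    · exact le_refl 0

/-- The sample measures `μ_q = ½δ_{a₀(q)} + ½δ_{a₁(q)}` supported on the attractor of the
birth-death chain satisfy: (i) invariance, i.e. the pushforward of `μ_q` under
`x ↦ f(q₀,x)` equals `μ_{θq}` for a.e. `q`; and (ii) the expected measure
`B ↦ ∫ μ_q(B) dℙ(q)` equals the unique stationary distribution `ρ` of the embedded
birth-death Markov chain. -/
theorem stmt17 (γ₁ γ₂ : ℝ) (hγ₁ : 0 < γ₁) (hγ₂ : 0 < γ₂)
    (P : Measure (ℤ → ℝ)) [IsProbabilityMeasure P]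
    (hIndep : iIndepFun (fun (i : ℤ) (q : ℤ → ℝ) => q i) P)
    (hUnif : ∀ i : ℤ, P.map (fun q => q i) = volume.restrict (Set.Icc (0 : ℝ) 1))
    (a₀ a₁ : (ℤ → ℝ) → ℕ)
    (ha₀ : ∀ᵐ q ∂P, ∀ᶠ n in atTop, bdPullback γ₁ γ₂ q n 0 = a₀ q)
    (ha₁ : ∀ᵐ q ∂P, ∀ᶠ n in atTop, bdPullback γ₁ γ₂ q n 1 = a₁ q)
    (ρ : ℕ → ℝ) (hρ01 : ∀ x, 0 ≤ ρ x ∧ ρ x ≤ 1) (hρsum : ∑' x, ρ x = 1)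
    (hρstat : ∀ y : ℕ, ∑' x : ℕ, ρ x * bdP γ₁ γ₂ x y = ρ y) :
    -- (i) invariance of the family of sample measures
    (∀ᵐ q ∂P, Measure.map (fun x => bdStep γ₁ γ₂ (q (0 : ℤ)) x)
        (sampleMeasure a₀ a₁ q) = sampleMeasure a₀ a₁ (shiftZ q)) ∧
    -- (ii) the expected measure is the stationary distribution ρ
    (∀ B : Set ℕ, ∫⁻ q, sampleMeasure a₀ a₁ q B ∂P = ∑' y : B, ENNReal.ofReal (ρ y)) := by
  classical
  have hsh : Measurable shiftZ := measurable_pi_lambda _ fun i => measurable_pi_apply _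
  have hmap : P.map shiftZ = P := shift_inv hIndep hUnif
  have hG : ∀ᵐ q ∂P, ∀ i : ℤ, q i < 1 := coord_lt_one hUnif
  have hshift_ae : ∀ {Φ : (ℤ → ℝ) → Prop}, (∀ᵐ q ∂P, Φ q) → (∀ᵐ q ∂P, Φ (shiftZ q)) := by
    intro Φ h
    have h2 : ∀ᵐ q ∂(P.map shiftZ), Φ q := by rwa [hmap]
    exact ae_of_ae_map hsh.aemeasurable h2
  have hE₀m : ∀ x, MeasurableSet (Eset γ₁ γ₂ 0 x) := fun x => negSig_le _ (Eset_meas 0 x)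
  have hE₁m : ∀ x, MeasurableSet (Eset γ₁ γ₂ 1 x) := fun x => negSig_le _ (Eset_meas 1 x)
  constructor
  · -- part (i)
    have hrel : ∀ᵐ q ∂P, bdStep γ₁ γ₂ (q 0) (a₀ q) = a₁ (shiftZ q)
        ∧ bdStep γ₁ γ₂ (q 0) (a₁ q) = a₀ (shiftZ q) := by
      filter_upwards [hG, ha₀, ha₁, hshift_ae ha₀, hshift_ae ha₁] with q hq h0 h1 h0s h1s
      constructor
      · obtain ⟨n, hn0, hn1⟩ := (h0.and h1s).exists
        rw [← hn0, ← hn1]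
        exact R1 hγ₁ q n (hq _)
      · obtain ⟨m, hm⟩ := eventually_atTop.mp (h1.and h0s)
        have h1m := (hm m le_rfl).1
        have h0m := (hm (m+1) (by omega)).2
        rw [← h1m, ← h0m]
        exact (R2 hγ₁ q m (hq _)).symm
    filter_upwards [hrel] with q hq
    obtain ⟨e1, e2⟩ := hq
    have hm : Measurable (fun x : ℕ => bdStep γ₁ γ₂ (q 0) x) := measurable_from_top
    unfold sampleMeasure
    rw [Measure.map_add _ _ hm, Measure.map_smul, Measure.map_smul,
      Measure.map_dirac' hm, Measure.map_dirac' hm, e1, e2, add_comm]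
  · -- part (ii)
    have key₁ : ∀ y, P (Eset γ₁ γ₂ 1 y)
        = ∑' x, P (Eset γ₁ γ₂ 0 x) * ENNReal.ofReal (bdP γ₁ γ₂ x y) := by
      intro y
      have h1 : P (Eset γ₁ γ₂ 1 y) = P (shiftZ ⁻¹' (Eset γ₁ γ₂ 1 y)) := by
        conv_lhs => rw [← hmap]
        rw [Measure.map_apply hsh (hE₁m y)]
      have h2 : shiftZ ⁻¹' (Eset γ₁ γ₂ 1 y)
          =ᵐ[P] ⋃ x, (Eset γ₁ γ₂ 0 x
            ∩ (fun q : ℤ → ℝ => q 0) ⁻¹' {r | bdStep γ₁ γ₂ r x = y}) := by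
        rw [Filter.eventuallyEq_set]
        filter_upwards [hG, ha₀] with q hq h0
        simp only [Set.mem_preimage, Set.mem_iUnion, Set.mem_inter_iff, Set.mem_setOf_eq]
        constructor
        · intro hL
          have hL' : ∀ᶠ n in atTop, bdPullback γ₁ γ₂ (shiftZ q) n 1 = y := hL
          refine ⟨a₀ q, h0, ?_⟩
          obtain ⟨n, hny, hn0⟩ := (hL'.and h0).exists
          rw [← R1 hγ₁ q n (hq _), hn0] at hny
          exact hny
        · rintro ⟨x, hx, hbd⟩
          have hx' : ∀ᶠ n in atTop, bdPullback γ₁ γ₂ q n 0 = x := hx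
          show ∀ᶠ n in atTop, bdPullback γ₁ γ₂ (shiftZ q) n 1 = y
          refine hx'.mono fun n hn => ?_
          rw [← R1 hγ₁ q n (hq _), hn, hbd]
      rw [h1, measure_congr h2,
        measure_iUnion
          (fun x x' hxx' => ((Eset_disj (γ₁ := γ₁) (γ₂ := γ₂) 0 hxx').mono
            Set.inter_subset_left Set.inter_subset_left))
          (fun x => (hE₀m x).inter (measurable_pi_apply 0 (bdStep_set_meas hγ₁ x y)))]
      exact tsum_congr fun x => by
        rw [indep_apply hIndep (Eset_meas 0 x) (bdStep_set_meas hγ₁ x y),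
          bdStep_event hγ₁ hγ₂ hUnif x y]
    have key₀ : ∀ y, P (Eset γ₁ γ₂ 0 y)
        = ∑' x, P (Eset γ₁ γ₂ 1 x) * ENNReal.ofReal (bdP γ₁ γ₂ x y) := by
      intro y
      have h1 : P (Eset γ₁ γ₂ 0 y) = P (shiftZ ⁻¹' (Eset γ₁ γ₂ 0 y)) := by
        conv_lhs => rw [← hmap]
        rw [Measure.map_apply hsh (hE₀m y)]
      have h2 : shiftZ ⁻¹' (Eset γ₁ γ₂ 0 y)
          =ᵐ[P] ⋃ x, (Eset γ₁ γ₂ 1 x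
            ∩ (fun q : ℤ → ℝ => q 0) ⁻¹' {r | bdStep γ₁ γ₂ r x = y}) := by
        rw [Filter.eventuallyEq_set]
        filter_upwards [hG, ha₁] with q hq h1q
        simp only [Set.mem_preimage, Set.mem_iUnion, Set.mem_inter_iff, Set.mem_setOf_eq]
        constructor
        · intro hL
          have hL' : ∀ᶠ n in atTop, bdPullback γ₁ γ₂ (shiftZ q) n 0 = y := hL
          have hL'' : ∀ᶠ n in atTop, bdPullback γ₁ γ₂ (shiftZ q) (n + 1) 0 = y :=
            (tendsto_add_atTop_nat 1).eventually hL'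
          refine ⟨a₁ q, h1q, ?_⟩
          obtain ⟨n, hny, hn1⟩ := (hL''.and h1q).exists
          rw [R2 hγ₁ q n (hq _), hn1] at hny
          exact hny
        · rintro ⟨x, hx, hbd⟩
          have hx' : ∀ᶠ n in atTop, bdPullback γ₁ γ₂ q n 1 = x := hx
          show ∀ᶠ n in atTop, bdPullback γ₁ γ₂ (shiftZ q) n 0 = y
          have hs : ∀ᶠ n in atTop, bdPullback γ₁ γ₂ (shiftZ q) (n + 1) 0 = y := by
            refine hx'.mono fun n hn => ?_
            rw [R2 hγ₁ q n (hq _), hn, hbd]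
          obtain ⟨m, hm⟩ := eventually_atTop.mp hs
          refine eventually_atTop.mpr ⟨m + 1, fun n hn => ?_⟩
          have := hm (n - 1) (by omega)
          rwa [Nat.sub_add_cancel (by omega)] at this
      rw [h1, measure_congr h2,
        measure_iUnion
          (fun x x' hxx' => ((Eset_disj (γ₁ := γ₁) (γ₂ := γ₂) 1 hxx').mono
            Set.inter_subset_left Set.inter_subset_left))
          (fun x => (hE₁m x).inter (measurable_pi_apply 0 (bdStep_set_meas hγ₁ x y)))]
      exact tsum_congr fun x => by
        rw [indep_apply hIndep (Eset_meas 1 x) (bdStep_set_meas hγ₁ x y),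
          bdStep_event hγ₁ hγ₂ hUnif x y]
    have hcover : ∀ x₀ : ℕ, (∀ᵐ q ∂P, ∀ᶠ n in atTop, bdPullback γ₁ γ₂ q n x₀ = (if x₀ = 0 then a₀ else a₁) q) → ∑' x, P (Eset γ₁ γ₂ x₀ x) = 1 := by
      intro x₀ ha
      rw [← measure_iUnion (Eset_disj x₀) (fun x => negSig_le _ (Eset_meas x₀ x))]
      have huniv : (⋃ x, Eset γ₁ γ₂ x₀ x) =ᵐ[P] (Set.univ : Set (ℤ → ℝ)) := by
        rw [Filter.eventuallyEq_set]
        filter_upwards [ha] with q h0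
        simp only [Set.mem_iUnion, Set.mem_univ, iff_true]
        exact ⟨(if x₀ = 0 then a₀ else a₁) q, h0⟩
      rw [measure_congr huniv, measure_univ]
    have htot₀ : ∑' x, P (Eset γ₁ γ₂ 0 x) = 1 := hcover 0 (by simpa using ha₀)
    have htot₁ : ∑' x, P (Eset γ₁ γ₂ 1 x) = 1 := hcover 1 (by simpa using ha₁)
    set ν : ℕ → ENNReal := fun y =>
      (1/2 : ENNReal) * P (Eset γ₁ γ₂ 0 y) + (1/2 : ENNReal) * P (Eset γ₁ γ₂ 1 y) with hν
    have hν_ne_top : ∀ y, ν y ≠ ⊤ := by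
      intro y
      rw [hν]
      exact ENNReal.add_ne_top.mpr
        ⟨ENNReal.mul_ne_top (by norm_num) (measure_ne_top P _),
         ENNReal.mul_ne_top (by norm_num) (measure_ne_top P _)⟩
    have hνsum : ∑' y, ν y = 1 := by
      rw [hν, ENNReal.tsum_add, ENNReal.tsum_mul_left, ENNReal.tsum_mul_left, htot₀, htot₁,
        mul_one]
      exact ENNReal.add_halves 1
    have hνstat : ∀ y, ∑' x, ν x * ENNReal.ofReal (bdP γ₁ γ₂ x y) = ν y := by
      intro y
      have hterm : ∀ x, ν x * ENNReal.ofReal (bdP γ₁ γ₂ x y)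
          = (1/2 : ENNReal) * (P (Eset γ₁ γ₂ 0 x) * ENNReal.ofReal (bdP γ₁ γ₂ x y))
            + (1/2 : ENNReal) * (P (Eset γ₁ γ₂ 1 x) * ENNReal.ofReal (bdP γ₁ γ₂ x y)) := by
        intro x; rw [hν]; ring
      rw [tsum_congr hterm, ENNReal.tsum_add, ENNReal.tsum_mul_left, ENNReal.tsum_mul_left,
        ← key₁ y, ← key₀ y, hν, add_comm]
    set g : ℕ → ℝ := fun y => (ν y).toReal with hg
    have hgsum : ∑' y, g y = 1 := by
      have h := ENNReal.tsum_toReal_eq (f := ν) hν_ne_top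
      rw [hνsum] at h
      simpa using h.symm
    have hgstat : ∀ y, ∑' x, g x * bdP γ₁ γ₂ x y = g y := by
      intro y
      have h := congrArg ENNReal.toReal (hνstat y)
      rw [ENNReal.tsum_toReal_eq
        (fun x => ENNReal.mul_ne_top (hν_ne_top x) ENNReal.ofReal_ne_top)] at h
      simp only [ENNReal.toReal_mul, ENNReal.toReal_ofReal (bdP_nonneg hγ₁ hγ₂ _ _)] at h
      exact h
    have hgρ : g = ρ := stationary_unique hγ₁ hγ₂ g ρ hgsum hρsum hgstat hρstat
    have hν_eq : ∀ y, ν y = ENNReal.ofReal (ρ y) := by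
      intro y
      rw [← hgρ]
      exact (ENNReal.ofReal_toReal (hν_ne_top y)).symm
    intro B
    have hBm : MeasurableSet B := MeasurableSet.of_discrete
    have hU₀m : MeasurableSet (⋃ y : B, Eset γ₁ γ₂ 0 (y : ℕ)) :=
      MeasurableSet.iUnion fun y => hE₀m y
    have hU₁m : MeasurableSet (⋃ y : B, Eset γ₁ γ₂ 1 (y : ℕ)) :=
      MeasurableSet.iUnion fun y => hE₁m y
    have h_ae : ∀ᵐ q ∂P, sampleMeasure a₀ a₁ q B
        = (1/2 : ENNReal) * Set.indicator (⋃ y : B, Eset γ₁ γ₂ 0 (y : ℕ)) 1 q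
          + (1/2 : ENNReal) * Set.indicator (⋃ y : B, Eset γ₁ γ₂ 1 (y : ℕ)) 1 q := by
      filter_upwards [ha₀, ha₁] with q h0 h1
      have hm₀ : (Measure.dirac (a₀ q)) B
          = Set.indicator (⋃ y : B, Eset γ₁ γ₂ 0 (y : ℕ)) 1 q := by
        rw [Measure.dirac_apply' _ hBm]
        by_cases hB : a₀ q ∈ B
        · rw [Set.indicator_of_mem hB, Set.indicator_of_mem
            (Set.mem_iUnion.mpr ⟨⟨a₀ q, hB⟩, h0⟩)]
          rfl
        · rw [Set.indicator_of_notMem hB, Set.indicator_of_notMem]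
          intro hq
          obtain ⟨⟨y, hyB⟩, hy⟩ := Set.mem_iUnion.mp hq
          have hy' : ∀ᶠ n in atTop, bdPullback γ₁ γ₂ q n 0 = y := hy
          obtain ⟨n, e1, e2⟩ := (hy'.and h0).exists
          have hxy : a₀ q = y := by rw [← e2]; exact e1
          exact hB (hxy ▸ hyB)
      have hm₁ : (Measure.dirac (a₁ q)) B
          = Set.indicator (⋃ y : B, Eset γ₁ γ₂ 1 (y : ℕ)) 1 q := by
        rw [Measure.dirac_apply' _ hBm]
        by_cases hB : a₁ q ∈ B
        · rw [Set.indicator_of_mem hB, Set.indicator_of_mem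
            (Set.mem_iUnion.mpr ⟨⟨a₁ q, hB⟩, h1⟩)]
          rfl
        · rw [Set.indicator_of_notMem hB, Set.indicator_of_notMem]
          intro hq
          obtain ⟨⟨y, hyB⟩, hy⟩ := Set.mem_iUnion.mp hq
          have hy' : ∀ᶠ n in atTop, bdPullback γ₁ γ₂ q n 1 = y := hy
          obtain ⟨n, e1, e2⟩ := (hy'.and h1).exists
          have hxy : a₁ q = y := by rw [← e2]; exact e1
          exact hB (hxy ▸ hyB)
      rw [sampleMeasure, Measure.add_apply, Measure.smul_apply, Measure.smul_apply,
        hm₀, hm₁, smul_eq_mul, smul_eq_mul]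
    rw [lintegral_congr_ae h_ae,
      lintegral_add_left ((measurable_one.indicator hU₀m).const_mul _),
      lintegral_const_mul _ (measurable_one.indicator hU₀m),
      lintegral_const_mul _ (measurable_one.indicator hU₁m),
      lintegral_indicator_one hU₀m, lintegral_indicator_one hU₁m]
    have hdisj₀ : Pairwise (Function.onFun Disjoint fun y : B => Eset γ₁ γ₂ 0 (y : ℕ)) :=
      fun y y' hyy' => Eset_disj (γ₁ := γ₁) (γ₂ := γ₂) 0 (fun h => hyy' (Subtype.ext h))
    have hdisj₁ : Pairwise (Function.onFun Disjoint fun y : B => Eset γ₁ γ₂ 1 (y : ℕ)) :=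
      fun y y' hyy' => Eset_disj (γ₁ := γ₁) (γ₂ := γ₂) 1 (fun h => hyy' (Subtype.ext h))
    rw [measure_iUnion hdisj₀ (fun y => hE₀m y), measure_iUnion hdisj₁ (fun y => hE₁m y),
      ← ENNReal.tsum_mul_left, ← ENNReal.tsum_mul_left, ← ENNReal.tsum_add]
    exact tsum_congr fun y => hν_eq y
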